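/- Let H ≥ 2 be an integer, I = {0,1,2} ∪ {2H}, and J = {0,1} ∪ {2H-1,2H}. Then |I| = |J| = 4, diam(I) = diam(J) = 2H, |hI| = |hJ| for all positive integers h < H, and |(2H-2)J| - |(2H-2)I| = (2H-1)² - (3H² - 2H) = H² - 2H + 1 > 0 (for H ≥ 3). -/

import Mathlib

open Finset Pointwise

/-- `hsum h A` is the `h`-fold sumset of `A` (pointwise sum of `h` copies). -/
def hsum (h : ℕ) (A : Finset ℤ) : Finset ℤ := ∑ _i ∈ Finset.range h, A

/-- `transl t A` is the translate `t + A`. -/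
def transl (t : ℤ) (A : Finset ℤ) : Finset ℤ := A.image (t + ·)


lemma hsum_zero (A : Finset ℤ) : hsum 0 A = {0} := by
  ext x; simp [hsum, Finset.mem_zero]

lemma hsum_succ (h : ℕ) (A : Finset ℤ) : hsum (h+1) A = hsum h A + A := by
  unfold hsum; rw [Finset.sum_range_succ]

lemma decomp (p q : ℕ) (c : ℤ) (h : ℕ) :
    hsum h (Finset.Icc 0 (p:ℤ) ∪ Finset.Icc c (c + q)) =
      (Finset.range (h+1)).biUnion
        (fun a => Finset.Icc ((a:ℤ)*c) ((a:ℤ)*c + (a:ℤ)*q + ((h:ℤ)-(a:ℤ))*p)) := by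
  induction h with
  | zero =>
    rw [hsum_zero]; ext x
    simp only [Finset.mem_biUnion, Finset.mem_range, Finset.mem_Icc, Finset.mem_singleton]
    constructor
    · rintro rfl; exact ⟨0, by norm_num⟩
    · rintro ⟨a, ha, h1, h2⟩
      interval_cases a
      simp at h1 h2; omega
  | succ n ih =>
    rw [hsum_succ, ih]
    ext x
    simp only [Finset.mem_add, Finset.mem_biUnion, Finset.mem_range, Finset.mem_Icc,
      Finset.mem_union]
    constructor
    · rintro ⟨y, ⟨a, ha, hy1, hy2⟩, z, hz, rfl⟩
      rcases hz with ⟨hz1, hz2⟩ | ⟨hz1, hz2⟩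
      · refine ⟨a, by omega, by push_cast; nlinarith, ?_⟩
        have e : ((a:ℤ))*c + (a:ℤ)*q + (((n:ℤ)+1)-(a:ℤ))*p
            = (a:ℤ)*c + (a:ℤ)*q + ((n:ℤ)-(a:ℤ))*p + p := by ring
        push_cast
        rw [e]; linarith
      · refine ⟨a+1, by omega, ?_, ?_⟩
        · have e : (((a:ℤ)+1))*c = (a:ℤ)*c + c := by ring
          push_cast
          rw [e]; linarith
        · have e : (((a:ℤ)+1))*c + ((a:ℤ)+1)*q + (((n:ℤ)+1)-((a:ℤ)+1))*p
            = ((a:ℤ)*c + (a:ℤ)*q + ((n:ℤ)-(a:ℤ))*p) + (c + q) := by ring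
          push_cast
          rw [e]; linarith
    · rintro ⟨b, hb, h1, h2⟩
      by_cases hbn : b ≤ n
      · -- use small element
        set U : ℤ := (b:ℤ)*c + (b:ℤ)*q + ((n:ℤ)-(b:ℤ))*p with hU
        by_cases hx : x ≤ U
        · exact ⟨x, ⟨b, by omega, h1, hx⟩, 0, Or.inl (by norm_num), by ring⟩
        · refine ⟨U, ⟨b, by omega, ?_, le_refl _⟩, x - U, Or.inl ⟨by omega, ?_⟩, by ring⟩
          · have hp : (0:ℤ) ≤ ((n:ℤ)-(b:ℤ))*p := by
              apply mul_nonneg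
              · push_cast; omega
              · positivity
            have hq : (0:ℤ) ≤ (b:ℤ)*q := by positivity
            linarith
          · have e : ((b:ℤ))*c + (b:ℤ)*q + (((n:ℤ)+1)-(b:ℤ))*p = U + p := by rw [hU]; ring
            push_cast at h2 ⊢
            rw [e] at h2; linarith
      · -- b = n+1, use big element
        have hb1 : b = n + 1 := by omega
        subst hb1
        have e1 : (((n:ℤ)+1))*c = (n:ℤ)*c + c := by ring
        have e2 : (((n:ℤ)+1))*c + ((n:ℤ)+1)*q + (((n:ℤ)+1)-((n:ℤ)+1))*p
            = (n:ℤ)*c + (n:ℤ)*q + c + q := by ring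
        push_cast at h1 h2
        rw [e1] at h1; rw [e2] at h2
        by_cases hx : x - c ≤ (n:ℤ)*c + (n:ℤ)*q
        · refine ⟨x - c, ⟨n, by omega, by linarith, ?_⟩, c, Or.inr ⟨le_refl _, by linarith [Int.natCast_nonneg q]⟩,
            by ring⟩
          have hp : (0:ℤ) ≤ ((n:ℤ)-(n:ℤ))*p := by simp
          linarith
        · refine ⟨(n:ℤ)*c + (n:ℤ)*q, ⟨n, by omega, ?_, ?_⟩, x - ((n:ℤ)*c + (n:ℤ)*q),
            Or.inr ⟨by linarith, by linarith⟩, by ring⟩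
          · have hq : (0:ℤ) ≤ (n:ℤ)*q := by positivity
            linarith
          · have : ((n:ℤ)-(n:ℤ))*p = 0 := by ring
            linarith

lemma merge (L U : ℕ → ℤ) : ∀ n : ℕ,
    (∀ m, m < n → L (m+1) ≤ U m + 1 ∧ U m ≤ U (m+1) ∧ L 0 ≤ L (m+1)) →
    (Finset.range (n+1)).biUnion (fun a => Finset.Icc (L a) (U a)) =
      Finset.Icc (L 0) (U n) := by
  intro n
  induction n with
  | zero => intro _; simp
  | succ m ih =>
    intro hc
    rw [Finset.range_add_one, Finset.biUnion_insert, ih (fun k hk => hc k (by omega))]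
    obtain ⟨c1, c2, c3⟩ := hc m (by omega)
    ext x
    simp only [Finset.mem_union, Finset.mem_Icc]
    omega

lemma biUnion_union_distrib (s t : Finset ℕ) (f : ℕ → Finset ℤ) :
    (s ∪ t).biUnion f = s.biUnion f ∪ t.biUnion f := by
  ext x; simp [Finset.mem_biUnion, or_and_right, exists_or]

lemma sum_odd : ∀ n : ℕ, ∑ k ∈ Finset.range n, (2*k+1) = n^2 := by
  intro n
  induction n with
  | zero => simp
  | succ m ih => rw [Finset.sum_range_succ, ih]; ring

lemma card_biUnion_Icc (s : Finset ℕ) (f g : ℕ → ℤ)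
    (hd : ∀ a ∈ s, ∀ b ∈ s, a < b → g a < f b) :
    (s.biUnion (fun a => Finset.Icc (f a) (g a))).card
      = ∑ a ∈ s, (Finset.Icc (f a) (g a)).card := by
  apply Finset.card_biUnion
  intro a ha b hb hab
  rw [Function.onFun, Finset.disjoint_left]
  intro x hx hx'
  simp only [Finset.mem_Icc] at hx hx'
  rcases Nat.lt_or_ge a b with h | h
  · have := hd a ha b hb h; omega
  · have := hd b hb a ha (by omega); omega

set_option maxHeartbeats 1000000 in
theorem stmt_9 (H : ℕ) (hH : 2 ≤ H)
    (I J : Finset ℤ) (hI : I = {0, 1, 2} ∪ {2 * (H : ℤ)})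
    (hJ : J = {0, 1} ∪ {2 * (H : ℤ) - 1, 2 * (H : ℤ)})
    (hIne : I.Nonempty) (hJne : J.Nonempty) :
    I.card = 4 ∧ J.card = 4 ∧
    I.max' hIne - I.min' hIne = 2 * (H : ℤ) ∧
    J.max' hJne - J.min' hJne = 2 * (H : ℤ) ∧
    (∀ h : ℕ, 1 ≤ h → h < H → (hsum h I).card = (hsum h J).card) ∧
    (((hsum (2 * H - 2) J).card : ℤ) - ((hsum (2 * H - 2) I).card : ℤ) =
        (2 * (H : ℤ) - 1) ^ 2 - (3 * (H : ℤ) ^ 2 - 2 * H) ∧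
      (2 * (H : ℤ) - 1) ^ 2 - (3 * (H : ℤ) ^ 2 - 2 * H) = (H : ℤ) ^ 2 - 2 * H + 1 ∧
      (3 ≤ H → 0 < (H : ℤ) ^ 2 - 2 * H + 1)) := by
  have hH4 : (4:ℤ) ≤ 2*(H:ℤ) := by push_cast; omega
  -- rewrite I and J as unions of intervals
  have hI' : I = Finset.Icc 0 ((2:ℕ):ℤ) ∪ Finset.Icc (2*(H:ℤ)) (2*(H:ℤ) + ((0:ℕ):ℤ)) := by
    rw [hI]; ext x; simp [Finset.mem_Icc]; omega
  have hJ' : J = Finset.Icc 0 ((1:ℕ):ℤ) ∪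
      Finset.Icc (2*(H:ℤ)-1) ((2*(H:ℤ)-1) + ((1:ℕ):ℤ)) := by
    rw [hJ]; ext x; simp [Finset.mem_Icc]; omega
  have hIdec : ∀ h : ℕ, hsum h I = (Finset.range (h+1)).biUnion
      (fun a => Finset.Icc ((a:ℤ)*(2*(H:ℤ))) ((a:ℤ)*(2*(H:ℤ)) + 2*((h:ℤ)-(a:ℤ)))) := by
    intro h
    rw [hI', decomp]
    apply Finset.biUnion_congr rfl
    intro a _
    congr 1
    push_cast; ring
  have hJdec : ∀ h : ℕ, hsum h J = (Finset.range (h+1)).biUnion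
      (fun a => Finset.Icc ((a:ℤ)*(2*(H:ℤ)-1)) ((a:ℤ)*(2*(H:ℤ)-1) + (h:ℤ))) := by
    intro h
    rw [hJ', decomp]
    apply Finset.biUnion_congr rfl
    intro a _
    congr 1
    push_cast; ring
  -- cardinalities of I and J
  have hIcard : I.card = 4 := by
    have e : I = ({0,1,2,2*(H:ℤ)} : Finset ℤ) := by
      rw [hI]; ext x; simp
    rw [e]
    rw [Finset.card_insert_of_notMem (by simp only [Finset.mem_insert, Finset.mem_singleton]; omega),
        Finset.card_insert_of_notMem (by simp only [Finset.mem_insert, Finset.mem_singleton]; omega),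
        Finset.card_insert_of_notMem (by simp only [Finset.mem_insert, Finset.mem_singleton]; omega), Finset.card_singleton]
  have hJcard : J.card = 4 := by
    have e : J = ({0,1,2*(H:ℤ)-1,2*(H:ℤ)} : Finset ℤ) := by
      rw [hJ]; ext x; simp; tauto
      
    rw [e]
    rw [Finset.card_insert_of_notMem (by simp only [Finset.mem_insert, Finset.mem_singleton]; omega),
        Finset.card_insert_of_notMem (by simp only [Finset.mem_insert, Finset.mem_singleton]; omega),
        Finset.card_insert_of_notMem (by simp only [Finset.mem_insert, Finset.mem_singleton]; omega), Finset.card_singleton]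
  -- min and max
  have hImin : I.min' hIne = 0 := by
    apply le_antisymm
    · exact Finset.min'_le _ 0 (by simp [hI])
    · apply Finset.le_min'
      intro y hy
      simp [hI] at hy
      rcases hy with rfl | rfl | rfl | rfl <;> omega
  have hImax : I.max' hIne = 2*(H:ℤ) := by
    apply le_antisymm
    · apply Finset.max'_le
      intro y hy
      simp [hI] at hy
      rcases hy with rfl | rfl | rfl | rfl <;> omega
    · exact Finset.le_max' _ _ (by simp [hI])
  have hJmin : J.min' hJne = 0 := by
    apply le_antisymm
    · exact Finset.min'_le _ 0 (by simp [hJ])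
    · apply Finset.le_min'
      intro y hy
      simp [hJ] at hy
      rcases hy with rfl | rfl | rfl | rfl <;> omega
  have hJmax : J.max' hJne = 2*(H:ℤ) := by
    apply le_antisymm
    · apply Finset.max'_le
      intro y hy
      simp [hJ] at hy
      rcases hy with rfl | rfl | rfl | rfl <;> omega
    · exact Finset.le_max' _ _ (by simp [hJ])
  -- card of hsum h I for h < H
  have cardI : ∀ h : ℕ, h < H → (hsum h I).card = (h+1)^2 := by
    intro h hh
    rw [hIdec h, card_biUnion_Icc]
    · have e : ∀ a ∈ Finset.range (h+1),
          (Finset.Icc ((a:ℤ)*(2*(H:ℤ))) ((a:ℤ)*(2*(H:ℤ)) + 2*((h:ℤ)-(a:ℤ)))).card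
            = 2*(h-a)+1 := by
        intro a ha
        simp only [Finset.mem_range] at ha
        rw [Int.card_Icc]
        have e2 : (a:ℤ)*(2*(H:ℤ)) + 2*((h:ℤ)-(a:ℤ)) + 1 - (a:ℤ)*(2*(H:ℤ))
            = 2*((h:ℤ)-(a:ℤ)) + 1 := by ring
        rw [e2]
        omega
      rw [Finset.sum_congr rfl e]
      have := Finset.sum_range_reflect (fun k => 2*k+1) (h+1)
      simp only [Nat.add_sub_cancel] at this
      rw [← sum_odd (h+1), ← this]
    · intro a ha b hb hab
      simp only [Finset.mem_range] at ha hb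
      have h1 : (a:ℤ) + 1 ≤ (b:ℤ) := by exact_mod_cast hab
      have h2 : ((a:ℤ)+1)*(2*(H:ℤ)) ≤ (b:ℤ)*(2*(H:ℤ)) := by
        apply mul_le_mul_of_nonneg_right h1; omega
      have h3 : (h:ℤ) ≤ (H:ℤ) - 1 := by omega
      have e : ((a:ℤ)+1)*(2*(H:ℤ)) = (a:ℤ)*(2*(H:ℤ)) + 2*(H:ℤ) := by ring
      have ha0 : (0:ℤ) ≤ (a:ℤ) := Int.natCast_nonneg a
      linarith
  -- card of hsum h J for h ≤ 2H-2
  have cardJ : ∀ h : ℕ, h ≤ 2*H-2 → (hsum h J).card = (h+1)^2 := by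
    intro h hh
    rw [hJdec h, card_biUnion_Icc]
    · have e : ∀ a ∈ Finset.range (h+1),
          (Finset.Icc ((a:ℤ)*(2*(H:ℤ)-1)) ((a:ℤ)*(2*(H:ℤ)-1) + (h:ℤ))).card = h+1 := by
        intro a _
        rw [Int.card_Icc]
        have e2 : (a:ℤ)*(2*(H:ℤ)-1) + (h:ℤ) + 1 - (a:ℤ)*(2*(H:ℤ)-1) = (h:ℤ) + 1 := by ring
        rw [e2]; omega
      rw [Finset.sum_congr rfl e, Finset.sum_const, Finset.card_range, smul_eq_mul, sq]
    · intro a ha b hb hab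
      simp only [Finset.mem_range] at ha hb
      have h1 : (a:ℤ) + 1 ≤ (b:ℤ) := by exact_mod_cast hab
      have h2 : ((a:ℤ)+1)*(2*(H:ℤ)-1) ≤ (b:ℤ)*(2*(H:ℤ)-1) := by
        apply mul_le_mul_of_nonneg_right h1; omega
      have h3 : (h:ℤ) ≤ 2*(H:ℤ) - 2 := by omega
      have e : ((a:ℤ)+1)*(2*(H:ℤ)-1) = (a:ℤ)*(2*(H:ℤ)-1) + (2*(H:ℤ)-1) := by ring
      linarith
  -- card of hsum (2H-2) J
  have cardJ2 : ((hsum (2*H-2) J).card : ℤ) = (2*(H:ℤ)-1)^2 := by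
    rw [cardJ (2*H-2) le_rfl, show 2*H-2+1 = 2*H-1 from by omega]
    have e : ((2*H-1:ℕ):ℤ) = 2*(H:ℤ)-1 := by push_cast; omega
    push_cast [e]
    ring
  -- card of hsum (2H-2) I
  have cardI2 : ((hsum (2*H-2) I).card : ℤ) = 3*(H:ℤ)^2 - 2*(H:ℤ) := by
    set h := 2*H-2 with hh
    have hhz : (h:ℤ) = 2*(H:ℤ) - 2 := by rw [hh]; push_cast; omega
    rw [hIdec h]
    have hsplit : Finset.range (h+1) = Finset.range H ∪ Finset.Ico H (2*H-1) := by
      have e0 : Finset.range (h+1) = Finset.Ico 0 (2*H-1) := by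
        rw [Finset.range_eq_Ico]; congr 1; omega
      rw [e0, Finset.range_eq_Ico]
      exact (Finset.Ico_union_Ico_eq_Ico (Nat.zero_le H) (by omega)).symm
    rw [hsplit, biUnion_union_distrib]
    have hrange : Finset.range H = Finset.range ((H-1)+1) := by congr 1; omega
    have hmerge : (Finset.range H).biUnion
        (fun a => Finset.Icc ((a:ℤ)*(2*(H:ℤ))) ((a:ℤ)*(2*(H:ℤ)) + 2*((h:ℤ)-(a:ℤ))))
        = Finset.Icc (((0:ℕ):ℤ)*(2*(H:ℤ)))
            ((((H-1:ℕ)):ℤ)*(2*(H:ℤ)) + 2*((h:ℤ)-((H-1:ℕ):ℤ))) := by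
      rw [hrange]
      exact merge (fun a => (a:ℤ)*(2*(H:ℤ)))
        (fun a => (a:ℤ)*(2*(H:ℤ)) + 2*((h:ℤ)-(a:ℤ))) (H-1)
        (by
          intro m hm
          have hm' : (m:ℤ) ≤ (H:ℤ) - 2 := by omega
          have e1 : ((m:ℤ)+1)*(2*(H:ℤ)) = (m:ℤ)*(2*(H:ℤ)) + 2*(H:ℤ) := by ring
          have hm0 : (0:ℤ) ≤ (m:ℤ) := Int.natCast_nonneg m
          have hm1 : (0:ℤ) ≤ ((m:ℤ)+1)*(2*(H:ℤ)) := by positivity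
          push_cast
          refine ⟨by linarith, by linarith, by linarith⟩)
    have hM1 : (((0:ℕ):ℤ)*(2*(H:ℤ))) = 0 := by norm_num
    have hM2 : ((((H-1:ℕ)):ℤ)*(2*(H:ℤ)) + 2*((h:ℤ)-((H-1:ℕ):ℤ))) = 2*(H:ℤ)^2 - 2 := by
      have : ((H-1:ℕ):ℤ) = (H:ℤ) - 1 := by push_cast; omega
      rw [this, hhz]; ring
    rw [hmerge, hM1, hM2]
    rw [Finset.card_union_of_disjoint]
    · have c1 : ((Finset.Icc (0:ℤ) (2*(H:ℤ)^2-2)).card : ℤ) = 2*(H:ℤ)^2 - 1 := by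
        rw [Int.card_Icc]
        have h0 : (0:ℤ) ≤ 2*(H:ℤ)^2 - 2 + 1 - 0 := by nlinarith [sq_nonneg ((H:ℤ)-1), hH4]
        rw [Int.toNat_of_nonneg h0]
        ring
      have c2 : (((Finset.Ico H (2*H-1)).biUnion
          (fun a => Finset.Icc ((a:ℤ)*(2*(H:ℤ))) ((a:ℤ)*(2*(H:ℤ)) + 2*((h:ℤ)-(a:ℤ))))).card : ℤ)
          = ((H:ℤ)-1)^2 := by
        rw [card_biUnion_Icc]
        · have e : ∀ a ∈ Finset.Ico H (2*H-1),
              (Finset.Icc ((a:ℤ)*(2*(H:ℤ))) ((a:ℤ)*(2*(H:ℤ)) + 2*((h:ℤ)-(a:ℤ)))).card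
                = 2*(h-a)+1 := by
            intro a ha
            simp only [Finset.mem_Ico] at ha
            rw [Int.card_Icc]
            have e2 : (a:ℤ)*(2*(H:ℤ)) + 2*((h:ℤ)-(a:ℤ)) + 1 - (a:ℤ)*(2*(H:ℤ))
                = 2*((h:ℤ)-(a:ℤ)) + 1 := by ring
            rw [e2]; omega
          rw [Finset.sum_congr rfl e, Finset.sum_Ico_eq_sum_range]
          have e3 : ∀ i ∈ Finset.range (2*H-1-H), 2*(h-(H+i))+1 = 2*((H-2)-i)+1 := by
            intro i hi
            simp only [Finset.mem_range] at hi
            omega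
          rw [Finset.sum_congr rfl e3]
          have e4 : 2*H-1-H = H-1 := by omega
          rw [e4]
          have := Finset.sum_range_reflect (fun k => 2*k+1) (H-1)
          have e5 : ∀ i ∈ Finset.range (H-1), 2*((H-2)-i)+1 = 2*(H-1-1-i)+1 := by
            intro i hi; omega
          rw [Finset.sum_congr rfl e5, this, sum_odd]
          have : ((H-1:ℕ):ℤ) = (H:ℤ) - 1 := by push_cast; omega
          push_cast [this]
          ring
        · intro a ha b hb hab
          simp only [Finset.mem_Ico] at ha hb
          have h1 : (a:ℤ) + 1 ≤ (b:ℤ) := by exact_mod_cast hab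
          have h2 : ((a:ℤ)+1)*(2*(H:ℤ)) ≤ (b:ℤ)*(2*(H:ℤ)) := by
            apply mul_le_mul_of_nonneg_right h1; omega
          have h3 : (H:ℤ) ≤ (a:ℤ) := by exact_mod_cast ha.1
          have e : ((a:ℤ)+1)*(2*(H:ℤ)) = (a:ℤ)*(2*(H:ℤ)) + 2*(H:ℤ) := by ring
          linarith
      push_cast at c1 c2 ⊢
      rw [c1, c2]  -- may need adjusting
      ring
    · rw [Finset.disjoint_left]
      intro x hx hx'
      simp only [Finset.mem_Icc] at hx
      simp only [Finset.mem_biUnion, Finset.mem_Ico, Finset.mem_Icc] at hx'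
      obtain ⟨a, ⟨ha1, _⟩, ha3, _⟩ := hx'
      have h3 : (H:ℤ) ≤ (a:ℤ) := by exact_mod_cast ha1
      have h2 : (H:ℤ)*(2*(H:ℤ)) ≤ (a:ℤ)*(2*(H:ℤ)) := by
        apply mul_le_mul_of_nonneg_right h3; omega
      have e : (H:ℤ)*(2*(H:ℤ)) = 2*(H:ℤ)^2 := by ring
      linarith
  refine ⟨hIcard, hJcard, by rw [hImax, hImin]; ring, by rw [hJmax, hJmin]; ring, ?_, ?_, ?_, ?_⟩
  · intro h h1 h2
    rw [cardI h h2, cardJ h (by omega)]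
  · rw [cardJ2, cardI2]
    try ring
  · ring
  · intro h3
    have h3' : (3:ℤ) ≤ (H:ℤ) := by exact_mod_cast h3
    nlinarith [sq_nonneg ((H:ℤ)-2), h3']
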